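/- Let p, q be coprime positive integers with q ≥ 9 and set ω = 2πp/q. Let A > 0 and β ≠ 0 be real constants and let η₁, η₂ ∈ ℝ be such that η₁ − η₂ is not an integer multiple of π. Then there exists r ∈ {0, 1, …, q−1} such that every k ∈ ℕ with k ≡ r (mod q) satisfies: β·sin(kω + η₂) > 0, sin(kω + η₁) ≠ 0, and β·A·sin(kω + η₁)/sin(kω + η₂) ∉ {1, −1}. -/

import Mathlib

open Real

private lemma lin_zero' {a b x y : ℝ} (hab : a ≠ 0 ∨ b ≠ 0)
    (hx : a * Real.sin x + b * Real.cos x = 0)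
    (hy : a * Real.sin y + b * Real.cos y = 0) :
    Real.sin (x - y) = 0 := by
  have h1 : a * (Real.sin x * Real.cos y - Real.cos x * Real.sin y) = 0 := by
    linear_combination Real.cos y * hx - Real.cos x * hy
  have h2 : b * (Real.sin x * Real.cos y - Real.cos x * Real.sin y) = 0 := by
    linear_combination (-Real.sin y) * hx + Real.sin x * hy
  rw [Real.sin_sub]
  rcases hab with h | h
  · exact (mul_eq_zero.mp h1).resolve_left h
  · exact (mul_eq_zero.mp h2).resolve_left h

private lemma nondeg' {u η₁ η₂ : ℝ} (hu : u ≠ 0)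
    (hη : ∀ n : ℤ, η₁ - η₂ ≠ n * π) (ε : ℝ) :
    u * Real.cos η₁ - ε * Real.cos η₂ ≠ 0 ∨ u * Real.sin η₁ - ε * Real.sin η₂ ≠ 0 := by
  by_contra h
  push_neg at h
  obtain ⟨h1, h2⟩ := h
  have hs : Real.sin (η₁ - η₂) = 0 := by
    have h3 : u * (Real.sin η₁ * Real.cos η₂ - Real.cos η₁ * Real.sin η₂) = 0 := by
      linear_combination Real.cos η₂ * h2 - Real.sin η₂ * h1
    rw [Real.sin_sub]
    exact (mul_eq_zero.mp h3).resolve_left hu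
  obtain ⟨n, hn⟩ := Real.sin_eq_zero_iff.mp hs
  exact hη n hn.symm

/-- Let `p, q` be coprime positive integers with `q ≥ 9` and `ω = 2πp/q`. Let `A > 0`,
`β ≠ 0`, and `η₁ − η₂` not an integer multiple of `π`. Then there exists
`r ∈ {0, …, q−1}` such that every `k ∈ ℕ` with `k ≡ r (mod q)` satisfies:
`β·sin(kω + η₂) > 0`, `sin(kω + η₁) ≠ 0`, and
`β·A·sin(kω + η₁)/sin(kω + η₂) ∉ {1, −1}`. -/
theorem stmt2 (p q : ℕ) (hp : 0 < p) (hq : 9 ≤ q) (hco : Nat.Coprime p q)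
    (A β η₁ η₂ : ℝ) (hA : 0 < A) (hβ : β ≠ 0)
    (hη : ∀ n : ℤ, η₁ - η₂ ≠ n * π) :
    ∃ r : ℕ, r < q ∧ ∀ k : ℕ, k % q = r →
      0 < β * sin (k * (2 * π * p / q) + η₂) ∧
      sin (k * (2 * π * p / q) + η₁) ≠ 0 ∧
      β * A * sin (k * (2 * π * p / q) + η₁) / sin (k * (2 * π * p / q) + η₂) ≠ 1 ∧
      β * A * sin (k * (2 * π * p / q) + η₁) / sin (k * (2 * π * p / q) + η₂) ≠ -1 := by
  classical
  haveI : NeZero q := ⟨by omega⟩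
  have hq9 : (9:ℝ) ≤ (q:ℝ) := by exact_mod_cast hq
  have hq0 : (0:ℝ) < (q:ℝ) := by linarith
  have hq0' : (q:ℝ) ≠ 0 := ne_of_gt hq0
  have hπ := Real.pi_pos
  have hπ' : π ≠ 0 := ne_of_gt hπ
  -- sign-adjusted phase
  set η₂' : ℝ := if 0 < β then η₂ else η₂ + π with hη₂'
  have key2 : ∀ x : ℝ, 0 < Real.sin (x + η₂') → 0 < β * Real.sin (x + η₂) := by
    intro x hx
    by_cases hb : 0 < β
    · rw [hη₂', if_pos hb] at hx
      exact mul_pos hb hx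
    · have hb' : β < 0 := lt_of_le_of_ne (not_lt.mp hb) hβ
      rw [hη₂', if_neg hb, show x + (η₂ + π) = (x + η₂) + π by ring,
        Real.sin_add_pi] at hx
      nlinarith
  set T : ℝ := (-η₂') * q / (2 * π) with hT
  set m : ℤ := ⌊T⌋ with hm
  have hmT : (m:ℝ) ≤ T := Int.floor_le T
  have hTm : T < m + 1 := Int.lt_floor_add_one T
  set z : ℤ → ℝ := fun c => 2 * π * c / q with hz
  have hangle : ∀ c : ℤ, (m:ℝ) + 1 ≤ c → (c:ℝ) ≤ m + 4 → 0 < Real.sin (z c + η₂') := by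
    intro c h1 h2
    have e : z c + η₂' = 2 * π / q * ((c:ℝ) - T) := by
      rw [hz, hT]; field_simp; ring
    have p1 : 0 < (c:ℝ) - T := by linarith
    have p2 : (c:ℝ) - T ≤ 4 := by linarith
    rw [e]
    apply Real.sin_pos_of_pos_of_lt_pi
    · positivity
    · have h3 : 2 * π / q * ((c:ℝ) - T) ≤ 2 * π / q * 4 :=
        mul_le_mul_of_nonneg_left p2 (by positivity)
      have h4 : 2 * π / (q:ℝ) * 4 < π := by
        rw [div_mul_eq_mul_div, div_lt_iff₀ hq0]
        nlinarith
      linarith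
  set u : ℝ := β * A with hu
  have hu0 : u ≠ 0 := mul_ne_zero hβ (ne_of_gt hA)
  set P1 : ℤ → Prop := fun c => Real.sin (z c + η₁) = 0 with hP1
  set P2 : ℤ → Prop := fun c => u * Real.sin (z c + η₁) - Real.sin (z c + η₂) = 0 with hP2
  set P3 : ℤ → Prop := fun c => u * Real.sin (z c + η₁) + Real.sin (z c + η₂) = 0 with hP3
  set s : Finset ℤ := {m + 1, m + 2, m + 3, m + 4} with hs
  have hcard : s.card = 4 := by
    rw [hs]
    rw [Finset.card_insert_of_notMem (by simp),
        Finset.card_insert_of_notMem (by simp),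
        Finset.card_insert_of_notMem (by simp), Finset.card_singleton]
  have hmemb : ∀ c ∈ s, m + 1 ≤ c ∧ c ≤ m + 4 := by
    intro c hc
    rw [hs] at hc
    simp only [Finset.mem_insert, Finset.mem_singleton] at hc
    rcases hc with rfl | rfl | rfl | rfl <;> omega
  have key_uniq : ∀ c ∈ s, ∀ c' ∈ s, Real.sin (z c - z c') = 0 → c = c' := by
    intro c hc c' hc' h0
    obtain ⟨n, hn⟩ := Real.sin_eq_zero_iff.mp h0
    have h3 : (n:ℝ) * (q:ℝ) = 2 * ((c:ℝ) - (c':ℝ)) := by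
      apply mul_left_cancel₀ hπ'
      rw [hz] at hn
      field_simp at hn
      linear_combination π * hn
    have hnq : n * (q:ℤ) = 2 * (c - c') := by exact_mod_cast h3
    obtain ⟨hb1, hb2⟩ := hmemb c hc
    obtain ⟨hb3, hb4⟩ := hmemb c' hc'
    have hq9' : (9:ℤ) ≤ (q:ℤ) := by exact_mod_cast hq
    rcases lt_trichotomy n 0 with h | h | h
    · nlinarith
    · rw [h] at hnq; omega
    · nlinarith
  have habsin : Real.cos η₁ ≠ 0 ∨ Real.sin η₁ ≠ 0 := by
    by_contra hh
    push_neg at hh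
    have := Real.sin_sq_add_cos_sq η₁
    rw [hh.1, hh.2] at this
    norm_num at this
  have uniq1 : ∀ c ∈ s, ∀ c' ∈ s, P1 c → P1 c' → c = c' := by
    intro c hc c' hc' h h'
    refine key_uniq c hc c' hc' (lin_zero' (a := Real.cos η₁) (b := Real.sin η₁) habsin ?_ ?_)
    · have hh : Real.sin (z c + η₁) = 0 := h
      rw [Real.sin_add] at hh
      linear_combination hh
    · have hh : Real.sin (z c' + η₁) = 0 := h'
      rw [Real.sin_add] at hh
      linear_combination hh
  have uniq2 : ∀ c ∈ s, ∀ c' ∈ s, P2 c → P2 c' → c = c' := by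
    intro c hc c' hc' h h'
    refine key_uniq c hc c' hc'
      (lin_zero' (a := u * Real.cos η₁ - 1 * Real.cos η₂)
        (b := u * Real.sin η₁ - 1 * Real.sin η₂) (nondeg' hu0 hη 1) ?_ ?_)
    · have hh : u * Real.sin (z c + η₁) - Real.sin (z c + η₂) = 0 := h
      rw [Real.sin_add, Real.sin_add] at hh
      linear_combination hh
    · have hh : u * Real.sin (z c' + η₁) - Real.sin (z c' + η₂) = 0 := h'
      rw [Real.sin_add, Real.sin_add] at hh
      linear_combination hh
  have uniq3 : ∀ c ∈ s, ∀ c' ∈ s, P3 c → P3 c' → c = c' := by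
    intro c hc c' hc' h h'
    refine key_uniq c hc c' hc'
      (lin_zero' (a := u * Real.cos η₁ - (-1) * Real.cos η₂)
        (b := u * Real.sin η₁ - (-1) * Real.sin η₂) (nondeg' hu0 hη (-1)) ?_ ?_)
    · have hh : u * Real.sin (z c + η₁) + Real.sin (z c + η₂) = 0 := h
      rw [Real.sin_add, Real.sin_add] at hh
      linear_combination hh
    · have hh : u * Real.sin (z c' + η₁) + Real.sin (z c' + η₂) = 0 := h'
      rw [Real.sin_add, Real.sin_add] at hh
      linear_combination hh
  have main : ∃ c ∈ s, ¬ P1 c ∧ ¬ P2 c ∧ ¬ P3 c := by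
    by_contra hcon
    have hsub : s ⊆ s.filter P1 ∪ s.filter P2 ∪ s.filter P3 := by
      intro c hc
      simp only [Finset.mem_union, Finset.mem_filter]
      by_cases h1 : P1 c
      · exact Or.inl (Or.inl ⟨hc, h1⟩)
      · by_cases h2 : P2 c
        · exact Or.inl (Or.inr ⟨hc, h2⟩)
        · by_cases h3 : P3 c
          · exact Or.inr ⟨hc, h3⟩
          · exact absurd ⟨c, hc, h1, h2, h3⟩ hcon
    have c1 : (s.filter P1).card ≤ 1 := Finset.card_le_one.mpr (fun a ha b hb =>
      uniq1 a (Finset.mem_filter.mp ha).1 b (Finset.mem_filter.mp hb).1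
        (Finset.mem_filter.mp ha).2 (Finset.mem_filter.mp hb).2)
    have c2 : (s.filter P2).card ≤ 1 := Finset.card_le_one.mpr (fun a ha b hb =>
      uniq2 a (Finset.mem_filter.mp ha).1 b (Finset.mem_filter.mp hb).1
        (Finset.mem_filter.mp ha).2 (Finset.mem_filter.mp hb).2)
    have c3 : (s.filter P3).card ≤ 1 := Finset.card_le_one.mpr (fun a ha b hb =>
      uniq3 a (Finset.mem_filter.mp ha).1 b (Finset.mem_filter.mp hb).1
        (Finset.mem_filter.mp ha).2 (Finset.mem_filter.mp hb).2)
    have hle := Finset.card_le_card hsub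
    have h5 := Finset.card_union_le (s.filter P1 ∪ s.filter P2) (s.filter P3)
    have h6 := Finset.card_union_le (s.filter P1) (s.filter P2)
    omega
  obtain ⟨c, hcs, hn1, hn2, hn3⟩ := main
  have hcb := hmemb c hcs
  have hpos : 0 < Real.sin (z c + η₂') := by
    apply hangle c
    · exact_mod_cast (by exact_mod_cast hcb.1 : ((m + 1 : ℤ):ℝ) ≤ (c:ℝ))
    · exact_mod_cast (by exact_mod_cast hcb.2 : ((c:ℤ):ℝ) ≤ ((m + 4 : ℤ):ℝ))
  have hposβ : 0 < β * Real.sin (z c + η₂) := key2 _ hpos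
  have hsin2ne : Real.sin (z c + η₂) ≠ 0 := by
    intro h
    rw [h, mul_zero] at hposβ
    exact lt_irrefl 0 hposβ
  -- construct the residue r
  have hpu : IsUnit ((p:ℕ) : ZMod q) := (ZMod.isUnit_iff_coprime p q).mpr hco
  set w : ZMod q := (c : ZMod q) * ((p : ZMod q))⁻¹ with hw
  refine ⟨w.val, ZMod.val_lt w, ?_⟩
  intro k hk
  -- k * p ≡ c  (mod q)
  have hzmod : (((k * p : ℕ) : ℤ) : ZMod q) = ((c : ℤ) : ZMod q) := by
    push_cast
    have hkw : ((k:ℕ) : ZMod q) = w := by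
      rw [← ZMod.natCast_mod k q, hk]
      exact ZMod.natCast_rightInverse w
    rw [hkw, hw, mul_assoc, ZMod.inv_mul_of_unit _ hpu, mul_one]
  have hmodeq : ((k * p : ℕ) : ℤ) ≡ c [ZMOD (q:ℕ)] :=
    (ZMod.intCast_eq_intCast_iff _ _ _).mp hzmod
  obtain ⟨d, hd⟩ := hmodeq.dvd
  have hkpc : ((k * p : ℕ) : ℤ) = c - (q:ℤ) * d := by linear_combination -hd
  have hreal : (k:ℝ) * (p:ℝ) = (c:ℝ) - (q:ℝ) * ((d : ℤ):ℝ) := by exact_mod_cast hkpc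
  have hsin : ∀ η : ℝ, Real.sin ((k:ℝ) * (2*π*(p:ℝ)/(q:ℝ)) + η) = Real.sin (z c + η) := by
    intro η
    have e : (k:ℝ) * (2*π*(p:ℝ)/(q:ℝ)) + η = (z c + η) + ((-d : ℤ):ℝ) * (2*π) := by
      push_cast
      rw [hz]
      field_simp
      linear_combination (2*π) * hreal
    rw [e, Real.sin_add_int_mul_two_pi]
  rw [hsin η₁, hsin η₂]
  refine ⟨hposβ, ?_, ?_, ?_⟩
  · intro h
    exact hn1 h
  · intro h
    apply hn2
    show u * Real.sin (z c + η₁) - Real.sin (z c + η₂) = 0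
    have h2 : u * Real.sin (z c + η₁) = Real.sin (z c + η₂) :=
      (div_eq_one_iff_eq hsin2ne).mp h
    linarith
  · intro h
    apply hn3
    show u * Real.sin (z c + η₁) + Real.sin (z c + η₂) = 0
    have h2 : u * Real.sin (z c + η₁) = -1 * Real.sin (z c + η₂) :=
      (div_eq_iff hsin2ne).mp h
    linarith
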